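/- arXiv:2506.15997 — 2 statements merged into one kernel-verified Lean document; each statement's English description precedes it below -/
import Mathlib

section
/- Let (G,D) be a standard pair with |D| = 1. Then G admits a strong orientation G⃗ with sdiam(G⃗) ≤ 6. -/
open SimpleGraph

variable {V : Type*}

/-- A graph is bridgeless if no edge is a bridge. -/
def IsBridgeless (G : SimpleGraph V) : Prop := ∀ e : Sym2 V, ¬ G.IsBridge e

/-- `R` is an orientation of `G`: every arc of `R` is an edge of `G`, every edge of `G`
receives exactly one direction. -/
def IsOrientation (G : SimpleGraph V) (R : V → V → Prop) : Prop :=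
  (∀ u v, R u v → G.Adj u v) ∧ (∀ u v, G.Adj u v → (R u v ∨ R v u)) ∧
  (∀ u v, R u v → ¬ R v u)

/-- There is a directed walk of length `n` from `u` to `v` along the relation `R`. -/
def HasDirWalk (R : V → V → Prop) (u v : V) (n : ℕ) : Prop :=
  ∃ f : Fin (n + 1) → V, f 0 = u ∧ f (Fin.last n) = v ∧
    ∀ i : Fin n, R (f i.castSucc) (f i.succ)

/-- `R` is strongly connected. -/
def IsStrong (R : V → V → Prop) : Prop := ∀ u v : V, ∃ n, HasDirWalk R u v n

/-- `R` is strongly connected within the vertex set `W`. -/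
def IsStrongOn (R : V → V → Prop) (W : Set V) : Prop :=
  ∀ u ∈ W, ∀ v ∈ W, ∃ n, HasDirWalk R u v n

/-- Directed distance `∂(u,v)`: length of a shortest directed path from `u` to `v`. -/
noncomputable def ddist (R : V → V → Prop) (u v : V) : ℕ := sInf {n | HasDirWalk R u v n}

/-- `θ(u,v) = max{∂(u,v), ∂(v,u)}`. -/
noncomputable def theta (R : V → V → Prop) (u v : V) : ℕ := max (ddist R u v) (ddist R v u)

/-- The diameter of a (strong) orientation. -/
noncomputable def diamOr [Fintype V] (R : V → V → Prop) : ℕ :=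
  Finset.univ.sup fun p : V × V => theta R p.1 p.2

/-- The oriented diameter of `G`. -/
noncomputable def orientedDiam [Fintype V] (G : SimpleGraph V) : ℕ :=
  sInf {d | ∃ R : V → V → Prop, IsOrientation G R ∧ IsStrong R ∧ diamOr R = d}

/-- `A` is the arc set of a strongly connected subdigraph of `R` containing `u` and `v`. -/
def IsStrongSubOn (R : V → V → Prop) (u v : V) (A : Set (V × V)) : Prop :=
  (∀ p ∈ A, R p.1 p.2) ∧
  (∀ x ∈ insert u (insert v (Prod.fst '' A ∪ Prod.snd '' A)),
   ∀ y ∈ insert u (insert v (Prod.fst '' A ∪ Prod.snd '' A)),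
     Relation.ReflTransGen (fun a b => (a, b) ∈ A) x y)

/-- Strong distance `sd(u,v)`: minimum number of arcs of a strong subdigraph containing
`u` and `v`. -/
noncomputable def sdist (R : V → V → Prop) (u v : V) : ℕ :=
  sInf {n | ∃ A : Set (V × V), A.Finite ∧ A.ncard = n ∧ IsStrongSubOn R u v A}

/-- The strong diameter of a (strong) orientation. -/
noncomputable def sdiamOr [Fintype V] (R : V → V → Prop) : ℕ :=
  Finset.univ.sup fun p : V × V => sdist R p.1 p.2

/-- The oriented strong diameter of `G`. -/
noncomputable def orientedSDiam [Fintype V] (G : SimpleGraph V) : ℕ :=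
  sInf {d | ∃ R : V → V → Prop, IsOrientation G R ∧ IsStrong R ∧ sdiamOr R = d}

/-- `D` is a dominating set of `G`. -/
def IsDominating (G : SimpleGraph V) (D : Set V) : Prop :=
  ∀ v ∉ D, ∃ u ∈ D, G.Adj u v

/-- The domination number of `G`. -/
noncomputable def dominationNumber [Fintype V] (G : SimpleGraph V) : ℕ :=
  sInf {n | ∃ D : Set V, D.ncard = n ∧ IsDominating G D}

/-- `v` is associated with an isolated triangle. -/
def HasIsolatedTriangle (G : SimpleGraph V) (v : V) : Prop :=
  ∃ v₁ v₂ : V, G.Adj v v₁ ∧ G.Adj v₁ v₂ ∧ G.Adj v₂ v ∧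
    (G.neighborSet v₁).ncard = 2 ∧ (G.neighborSet v₂).ncard = 2

/-- `(G, D)` is a standard pair. -/
def IsStandardPair (G : SimpleGraph V) (D : Set V) : Prop :=
  IsBridgeless G ∧
  (∀ u ∈ D, ∀ v ∈ D, ¬ G.Adj u v) ∧
  (∀ v ∉ D, ∃! u, u ∈ D ∧ G.Adj u v) ∧
  (∀ v ∈ D, HasIsolatedTriangle G v)

/-- `H` is an alternative subgraph of `G` with respect to the dominating set `D`. -/
def IsAlternative (G : SimpleGraph V) (D : Set V) (H : G.Subgraph) : Prop :=
  IsBridgeless H.coe ∧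
  (H.verts ∩ D).Nonempty ∧
  (∀ x ∈ H.verts ∩ D, ∃ a b : V, a ≠ b ∧ a ∉ D ∧ b ∉ D ∧ H.Adj x a ∧ H.Adj x b ∧
    ∀ c, c ∉ D → H.Adj x c → c = a ∨ c = b) ∧
  (∀ y ∈ H.verts, y ∉ D → ∃ x ∈ H.verts ∩ D, H.Adj x y)

/-- `d_i(H⃗)`: maximum of `θ(u,v)` over pairs `u, v ∈ W` with `|{u,v} ∩ D| = i`. -/
noncomputable def dPairs (R : V → V → Prop) (W D : Set V) (i : ℕ) : ℕ :=
  sSup {k | ∃ u ∈ W, ∃ v ∈ W, ({u, v} ∩ D).ncard = i ∧ theta R u v = k}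

/-- `m(H⃗) = max{d₀ − 2, d₁ − 1, d₂}`. -/
noncomputable def mOf (R : V → V → Prop) (W D : Set V) : ℕ :=
  max (dPairs R W D 0 - 2) (max (dPairs R W D 1 - 1) (dPairs R W D 2))

/-- The graph obtained from `G` by subdividing the edge `uv` with a new vertex `none`. -/
def subdivide (G : SimpleGraph V) (u v : V) : SimpleGraph (Option V) :=
  SimpleGraph.fromRel fun a b =>
    match a, b with
    | some x, some y => G.Adj x y ∧ ¬(x = u ∧ y = v) ∧ ¬(x = v ∧ y = u)
    | some x, none => x = u ∨ x = v
    | none, _ => False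

/-- The graph obtained from `G` by attaching a pendant triangle at `v`. -/
def pendantTriangle (G : SimpleGraph V) (v : V) : SimpleGraph (V ⊕ Fin 2) :=
  SimpleGraph.fromRel fun a b =>
    match a, b with
    | Sum.inl x, Sum.inl y => G.Adj x y
    | Sum.inl x, Sum.inr _ => x = v
    | Sum.inr _, Sum.inl _ => False
    | Sum.inr i, Sum.inr j => i ≠ j

/-- `G` has a Hamiltonian path with endpoints `u` and `v`. -/
def HasHamiltonianPathBetween (G : SimpleGraph V) (u v : V) : Prop :=
  ∃ p : G.Walk u v, p.IsPath ∧ ∀ w : V, w ∈ p.support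

-- helpers
lemma walk0 {R : V → V → Prop} (u : V) : HasDirWalk R u u 0 :=
  ⟨fun _ => u, rfl, rfl, fun i => i.elim0⟩

lemma walk_cons {R : V → V → Prop} {u v w : V} {n : ℕ} (h : R u v)
    (hw : HasDirWalk R v w n) : HasDirWalk R u w (n + 1) := by
  obtain ⟨f, h0, hl, hs⟩ := hw
  refine ⟨Fin.cons u f, rfl, ?_, ?_⟩
  · rw [← Fin.succ_last, Fin.cons_succ]; exact hl
  · intro i
    refine Fin.cases ?_ (fun j => ?_) i
    · simpa [Fin.castSucc_zero, Fin.cons_succ, h0] using h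
    · rw [show j.succ.castSucc = j.castSucc.succ from rfl, Fin.cons_succ, Fin.cons_succ]
      exact hs j

lemma walk1 {R : V → V → Prop} {u v : V} (h : R u v) : HasDirWalk R u v 1 :=
  walk_cons h (walk0 v)

lemma walk_head {R : V → V → Prop} {u v : V} {m : ℕ}
    (h : HasDirWalk R u v (m + 1)) : ∃ x, R u x ∧ HasDirWalk R x v m := by
  obtain ⟨f, h0, hl, hs⟩ := h
  refine ⟨f 1, ?_, f ∘ Fin.succ, by simp [Fin.succ_zero_eq_one], ?_, ?_⟩
  · have := hs 0
    rwa [Fin.castSucc_zero, h0, Fin.succ_zero_eq_one] at this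
  · rw [Function.comp_apply, Fin.succ_last]; exact hl
  · intro i
    have := hs i.succ
    rwa [← Fin.succ_castSucc] at this

lemma walk_nil {R : V → V → Prop} {u v : V} (h : HasDirWalk R u v 0) : u = v := by
  obtain ⟨f, h0, hl, -⟩ := h
  rw [← h0, ← hl]; rfl

lemma walk_concat {R : V → V → Prop} : ∀ (m : ℕ) {u v w : V} (n : ℕ),
    HasDirWalk R u v m → HasDirWalk R v w n → ∃ k, HasDirWalk R u w k := by
  intro m
  induction m with
  | zero =>
    intro u v w n h1 h2
    obtain rfl := walk_nil h1
    exact ⟨n, h2⟩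
  | succ m ih =>
    intro u v w n h1 h2
    obtain ⟨x, hx, hxv⟩ := walk_head h1
    obtain ⟨k, hk⟩ := ih n hxv h2
    exact ⟨k + 1, walk_cons hx hk⟩


set_option maxHeartbeats 2000000 in
/-- A standard pair with `|D| = 1` admits a strong orientation with
strong diameter at most 6. -/
theorem sdiam_le_six_of_domination_one {V : Type*} [Fintype V]
    (G : SimpleGraph V) (D : Set V) (hstd : IsStandardPair G D)
    (hD : D.ncard = 1) :
    ∃ R : V → V → Prop, IsOrientation G R ∧ IsStrong R ∧ sdiamOr R ≤ 6 := by
  classical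
  obtain ⟨d, hDd⟩ := Set.ncard_eq_one.mp hD
  obtain ⟨hbr, hind, hdom, htri⟩ := hstd
  subst hDd
  -- every vertex other than d is adjacent to d
  have hadj : ∀ v, v ≠ d → G.Adj d v := by
    intro v hv
    obtain ⟨u, ⟨huD, huv⟩, -⟩ := hdom v (by simpa using hv)
    rw [Set.mem_singleton_iff] at huD
    subst huD; exact huv
  -- every vertex other than d has a neighbor other than d
  have hnbr : ∀ v, v ≠ d → ∃ w, w ≠ d ∧ G.Adj v w := by
    intro v hv
    have hbridge := hbr s(d, v)
    rw [SimpleGraph.isBridge_iff] at hbridge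
    push_neg at hbridge
    obtain ⟨p⟩ := hbridge
    have hnn : ¬ p.reverse.Nil := SimpleGraph.Walk.not_nil_of_ne hv
    rw [SimpleGraph.Walk.not_nil_iff] at hnn
    obtain ⟨w, hw, q, -⟩ := hnn
    rw [SimpleGraph.deleteEdges_adj] at hw
    refine ⟨w, ?_, hw.1⟩
    intro hwd
    exact hw.2 (Set.mem_singleton_iff.mpr (by rw [hwd]; exact Sym2.eq_swap))
  -- a maximum independent set among vertices ≠ d
  set P : Finset V → Prop :=
    fun s => (∀ v ∈ s, v ≠ d) ∧ ∀ u ∈ s, ∀ w ∈ s, ¬ G.Adj u w with hP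
  have hPempty : P ∅ := ⟨by simp, by simp⟩
  obtain ⟨A, hAmem, hAmax⟩ := Finset.exists_max_image
    (Finset.univ.filter P) Finset.card ⟨∅, by simpa using hPempty⟩
  rw [Finset.mem_filter] at hAmem
  obtain ⟨-, hAd, hAind⟩ := hAmem
  have hAmax' : ∀ t, P t → t.card ≤ A.card := by
    intro t ht
    exact hAmax t (Finset.mem_filter.mpr ⟨Finset.mem_univ t, ht⟩)
  have hBdom : ∀ v, v ≠ d → v ∉ A → ∃ a ∈ A, G.Adj a v := by
    intro v hv hvA
    by_contra hc
    push_neg at hc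
    have hins : P (insert v A) := by
      constructor
      · intro u hu
        rcases Finset.mem_insert.mp hu with rfl | hu
        · exact hv
        · exact hAd u hu
      · intro u hu w hw hadjuw
        rcases Finset.mem_insert.mp hu with rfl | hu'
        · rcases Finset.mem_insert.mp hw with rfl | hw'
          · exact G.irrefl hadjuw
          · exact hc w hw' hadjuw.symm
        · rcases Finset.mem_insert.mp hw with rfl | hw'
          · exact hc u hu' hadjuw
          · exact hAind u hu' w hw' hadjuw
    have := hAmax' _ hins
    rw [Finset.card_insert_of_notMem hvA] at this
    omega
  have hAnb : ∀ a ∈ A, ∃ b, b ≠ d ∧ b ∉ A ∧ G.Adj a b := by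
    intro a ha
    obtain ⟨w, hwd, haw⟩ := hnbr a (hAd a ha)
    refine ⟨w, hwd, fun hwA => hAind a ha w hwA haw, haw⟩
  -- an ordering function
  set ee : V → ℕ := fun v => ((Fintype.equivFin V) v : ℕ) with hee
  have heeinj : ∀ u v : V, ee u = ee v → u = v := by
    intro u v h
    exact (Fintype.equivFin V).injective (Fin.val_injective h)
  -- the orientation
  set R : V → V → Prop := fun u v => G.Adj u v ∧
    ((u = d ∧ v ∈ A) ∨ (v = d ∧ u ∉ A) ∨
      (u ≠ d ∧ v ≠ d ∧ ((u ∈ A ∧ v ∉ A) ∨ ((u ∈ A ↔ v ∈ A) ∧ ee u < ee v))))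
    with hR
  have hOr : IsOrientation G R := by
    refine ⟨fun u v h => h.1, ?_, ?_⟩
    · intro u v h
      by_cases hu : u = d
      · subst hu
        by_cases hvA : v ∈ A
        · exact Or.inl ⟨h, Or.inl ⟨rfl, hvA⟩⟩
        · exact Or.inr ⟨h.symm, Or.inr (Or.inl ⟨rfl, hvA⟩)⟩
      · by_cases hv : v = d
        · subst hv
          by_cases huA : u ∈ A
          · exact Or.inr ⟨h.symm, Or.inl ⟨rfl, huA⟩⟩
          · exact Or.inl ⟨h, Or.inr (Or.inl ⟨rfl, huA⟩)⟩
        · have hne : ee u ≠ ee v := fun hh => h.ne (heeinj u v hh)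
          by_cases huA : u ∈ A <;> by_cases hvA : v ∈ A
          · rcases lt_or_gt_of_ne hne with hlt | hlt
            · exact Or.inl ⟨h, Or.inr (Or.inr ⟨hu, hv, Or.inr ⟨by tauto, hlt⟩⟩)⟩
            · exact Or.inr ⟨h.symm, Or.inr (Or.inr ⟨hv, hu, Or.inr ⟨by tauto, hlt⟩⟩)⟩
          · exact Or.inl ⟨h, Or.inr (Or.inr ⟨hu, hv, Or.inl ⟨huA, hvA⟩⟩)⟩
          · exact Or.inr ⟨h.symm, Or.inr (Or.inr ⟨hv, hu, Or.inl ⟨hvA, huA⟩⟩)⟩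
          · rcases lt_or_gt_of_ne hne with hlt | hlt
            · exact Or.inl ⟨h, Or.inr (Or.inr ⟨hu, hv, Or.inr ⟨by tauto, hlt⟩⟩)⟩
            · exact Or.inr ⟨h.symm, Or.inr (Or.inr ⟨hv, hu, Or.inr ⟨by tauto, hlt⟩⟩)⟩
    · rintro u v ⟨hadj1, h1⟩ ⟨hadj2, h2⟩
      have hne : u ≠ v := hadj1.ne
      rcases h1 with ⟨rfl, hvA⟩ | ⟨rfl, huA⟩ | ⟨hund, hvnd, hc⟩
      · rcases h2 with ⟨rfl, hdA⟩ | ⟨-, hvA'⟩ | ⟨hvnd, hdnd, -⟩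
        · exact hne rfl
        · exact hvA' hvA
        · exact hdnd rfl
      · rcases h2 with ⟨-, huA'⟩ | ⟨rfl, -⟩ | ⟨hdnd, -, -⟩
        · exact huA huA'
        · exact hne rfl
        · exact hdnd rfl
      · rcases h2 with ⟨rfl, -⟩ | ⟨rfl, -⟩ | ⟨-, -, hc'⟩
        · exact hvnd rfl
        · exact hund rfl
        · rcases hc with ⟨huA, hvA⟩ | ⟨hiff, hlt⟩ <;>
            rcases hc' with ⟨hvA', huA'⟩ | ⟨hiff', hlt'⟩
          · exact hvA hvA'
          · exact hvA (hiff'.2 huA)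
          · exact huA' (hiff.2 hvA')
          · exact absurd hlt' (not_lt.mpr (le_of_lt hlt))
  -- basic arcs
  have hRda : ∀ a, a ∈ A → R d a := by
    intro a ha
    exact ⟨hadj a (hAd a ha), Or.inl ⟨rfl, ha⟩⟩
  have hRbd : ∀ b, b ≠ d → b ∉ A → R b d := by
    intro b hb hbA
    exact ⟨(hadj b hb).symm, Or.inr (Or.inl ⟨rfl, hbA⟩)⟩
  -- every vertex ≠ d lies on a directed triangle through d
  have cyc : ∀ v, v ≠ d → ∃ x y, R d x ∧ R x y ∧ R y d ∧ (v = x ∨ v = y) := by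
    intro v hv
    by_cases hvA : v ∈ A
    · obtain ⟨b, hbd, hbA, hvb⟩ := hAnb v hvA
      exact ⟨v, b, hRda v hvA,
        ⟨hvb, Or.inr (Or.inr ⟨hv, hbd, Or.inl ⟨hvA, hbA⟩⟩)⟩,
        hRbd b hbd hbA, Or.inl rfl⟩
    · obtain ⟨a, ha, hav⟩ := hBdom v hv hvA
      exact ⟨a, v, hRda a ha,
        ⟨hav, Or.inr (Or.inr ⟨hAd a ha, hv, Or.inl ⟨ha, hvA⟩⟩)⟩,
        hRbd v hv hvA, Or.inr rfl⟩
  -- a default triangle (from the isolated triangle at d)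
  obtain ⟨v₁, v₂, hdv₁, -, -, -, -⟩ := htri d rfl
  have hv₁ : v₁ ≠ d := hdv₁.ne'
  -- triangle for an arbitrary vertex
  have hT : ∀ u : V, ∃ x y, R d x ∧ R x y ∧ R y d ∧ (u = d ∨ u = x ∨ u = y) := by
    intro u
    by_cases hu : u = d
    · obtain ⟨x, y, h1, h2, h3, -⟩ := cyc v₁ hv₁
      exact ⟨x, y, h1, h2, h3, Or.inl hu⟩
    · obtain ⟨x, y, h1, h2, h3, h4⟩ := cyc u hu
      exact ⟨x, y, h1, h2, h3, Or.inr h4⟩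
  -- walks from d and to d of length ≤ 2
  have hfromd : ∀ v : V, ∃ n ≤ 2, HasDirWalk R d v n := by
    intro v
    obtain ⟨x, y, h1, h2, h3, h4⟩ := hT v
    rcases h4 with h | h | h
    · rw [h]; exact ⟨0, by omega, walk0 d⟩
    · rw [h]; exact ⟨1, by omega, walk1 h1⟩
    · rw [h]; exact ⟨2, by omega, walk_cons h1 (walk1 h2)⟩
  have htod : ∀ v : V, ∃ n ≤ 2, HasDirWalk R v d n := by
    intro v
    obtain ⟨x, y, h1, h2, h3, h4⟩ := hT v
    rcases h4 with h | h | h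
    · rw [h]; exact ⟨0, by omega, walk0 d⟩
    · rw [h]; exact ⟨2, by omega, walk_cons h2 (walk1 h3)⟩
    · rw [h]; exact ⟨1, by omega, walk1 h3⟩
  have hStrong : IsStrong R := by
    intro u v
    obtain ⟨m, -, hw1⟩ := htod u
    obtain ⟨n, -, hw2⟩ := hfromd v
    exact walk_concat m n hw1 hw2
  clear hR hee hP hAmax hAmax' hPempty hAd hAind hBdom hAnb heeinj hRda hRbd cyc
    hdv₁ hv₁ hadj hnbr hdom htri hind hbr hD hfromd htod
  clear_value R ee P
  clear ee P A v₁ v₂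
  refine ⟨R, hOr, hStrong, ?_⟩
  -- strong diameter bound
  rw [sdiamOr]
  apply Finset.sup_le
  rintro ⟨u, v⟩ -
  obtain ⟨x, y, h1, h2, h3, h4⟩ := hT u
  obtain ⟨x', y', h1', h2', h3', h4'⟩ := hT v
  obtain ⟨S, hS⟩ : ∃ S : Set (V × V),
      S = {(d, x), (x, y), (y, d), (d, x'), (x', y'), (y', d)} := ⟨_, rfl⟩
  have hreach : ∀ z : V, z = d ∨ z = x ∨ z = y ∨ z = x' ∨ z = y' →
      Relation.ReflTransGen (fun a b => (a, b) ∈ S) d z ∧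
        Relation.ReflTransGen (fun a b => (a, b) ∈ S) z d := by
    have a1 : (d, x) ∈ S := by rw [hS]; simp
    have a2 : (x, y) ∈ S := by rw [hS]; simp
    have a3 : (y, d) ∈ S := by rw [hS]; simp
    have a4 : (d, x') ∈ S := by rw [hS]; simp
    have a5 : (x', y') ∈ S := by rw [hS]; simp
    have a6 : (y', d) ∈ S := by rw [hS]; simp
    rintro z (rfl | rfl | rfl | rfl | rfl)
    · exact ⟨Relation.ReflTransGen.refl, Relation.ReflTransGen.refl⟩
    · exact ⟨Relation.ReflTransGen.single a1,
        (Relation.ReflTransGen.single a2).trans (Relation.ReflTransGen.single a3)⟩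
    · exact ⟨(Relation.ReflTransGen.single a1).trans (Relation.ReflTransGen.single a2),
        Relation.ReflTransGen.single a3⟩
    · exact ⟨Relation.ReflTransGen.single a4,
        (Relation.ReflTransGen.single a5).trans (Relation.ReflTransGen.single a6)⟩
    · exact ⟨(Relation.ReflTransGen.single a4).trans (Relation.ReflTransGen.single a5),
        Relation.ReflTransGen.single a6⟩
  have hmemclass : ∀ z ∈ insert u (insert v (Prod.fst '' S ∪ Prod.snd '' S)),
      z = d ∨ z = x ∨ z = y ∨ z = x' ∨ z = y' := by
    intro z hz
    rcases hz with rfl | rfl | hz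
    · rcases h4 with h | h | h <;> tauto
    · rcases h4' with h | h | h <;> tauto
    · rcases hz with ⟨⟨a, b⟩, hab, rfl⟩ | ⟨⟨a, b⟩, hab, rfl⟩ <;>
        · simp only [hS, Set.mem_insert_iff, Set.mem_singleton_iff, Prod.mk.injEq] at hab
          rcases hab with ⟨rfl, rfl⟩ | ⟨rfl, rfl⟩ | ⟨rfl, rfl⟩ | ⟨rfl, rfl⟩ |
            ⟨rfl, rfl⟩ | ⟨rfl, rfl⟩ <;> tauto
  have hsub : IsStrongSubOn R u v S := by
    constructor
    · rintro ⟨a, b⟩ hab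
      simp only [hS, Set.mem_insert_iff, Set.mem_singleton_iff, Prod.mk.injEq] at hab
      rcases hab with ⟨rfl, rfl⟩ | ⟨rfl, rfl⟩ | ⟨rfl, rfl⟩ | ⟨rfl, rfl⟩ |
        ⟨rfl, rfl⟩ | ⟨rfl, rfl⟩ <;> assumption
    · intro a ha b hb
      obtain ⟨-, had⟩ := hreach a (hmemclass a ha)
      obtain ⟨hdb, -⟩ := hreach b (hmemclass b hb)
      exact had.trans hdb
  have hfin : S.Finite := Set.toFinite S
  have hcard : S.ncard ≤ 6 := by
    rw [hS]
    refine le_trans (Set.ncard_insert_le _ _) ?_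
    refine le_trans (Nat.add_le_add_right (Set.ncard_insert_le _ _) 1) ?_
    refine le_trans (Nat.add_le_add_right (Nat.add_le_add_right
      (Set.ncard_insert_le _ _) 1) 1) ?_
    refine le_trans (Nat.add_le_add_right (Nat.add_le_add_right
      (Nat.add_le_add_right (Set.ncard_insert_le _ _) 1) 1) 1) ?_
    refine le_trans (Nat.add_le_add_right (Nat.add_le_add_right
      (Nat.add_le_add_right (Nat.add_le_add_right
        (Set.ncard_insert_le _ _) 1) 1) 1) 1) ?_
    simp [Set.ncard_singleton]
  calc sdist R u v ≤ S.ncard := Nat.sInf_le ⟨S, hfin, rfl, hsub⟩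
    _ ≤ 6 := hcard
end

section
/- Let (G,D) be a standard pair with |D| = 1 and dominating vertex v. Then G admits a strong orientation in which every dominated vertex lies on a directed triangle through v. -/
open SimpleGraph

variable {V : Type*}

-- helpers
lemma hasDirWalk_zero (R : V → V → Prop) (u : V) : HasDirWalk R u u 0 :=
  ⟨fun _ => u, rfl, rfl, fun i => i.elim0⟩

lemma hasDirWalk_one {R : V → V → Prop} {u w : V} (h : R u w) : HasDirWalk R u w 1 := by
  refine ⟨fun i => if (i : ℕ) = 0 then u else w, by simp, by simp [Fin.last], ?_⟩
  intro i
  fin_cases i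
  simpa using h

lemma hasDirWalk_snoc {R : V → V → Prop} {a b c : V} {m : ℕ}
    (h1 : HasDirWalk R a b m) (h2 : R b c) : HasDirWalk R a c (m + 1) := by
  obtain ⟨f, hf0, hfl, hf⟩ := h1
  refine ⟨fun i => if h : (i : ℕ) ≤ m then f ⟨i, by omega⟩ else c, ?_, ?_, ?_⟩
  · simp [hf0]
  · simp [Fin.last]
  · intro i
    dsimp only
    have hc : ((i.castSucc : Fin (m+2)) : ℕ) = (i : ℕ) := rfl
    have hs : ((i.succ : Fin (m+2)) : ℕ) = (i : ℕ) + 1 := rfl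
    rcases lt_or_eq_of_le (Nat.lt_succ_iff.mp i.isLt) with h | h
    · rw [dif_pos (by omega), dif_pos (by omega)]
      have := hf ⟨(i : ℕ), h⟩
      convert this using 2 <;> rfl
    · rw [dif_pos (by omega), dif_neg (by omega)]
      have : f ⟨((i.castSucc : Fin (m+2)) : ℕ), by omega⟩ = b := by
        rw [← hfl]; congr 1; apply Fin.ext; simp [Fin.last, hc, h]
      rw [this]; exact h2

def myH (G : SimpleGraph V) (v : V) : SimpleGraph V where
  Adj a b := G.Adj a b ∧ a ≠ v ∧ b ≠ v
  symm := ⟨fun _ _ ⟨h, ha, hb⟩ => ⟨h.symm, hb, ha⟩⟩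
  loopless := ⟨fun a h => G.loopless.irrefl a h.1⟩

noncomputable def myC (G : SimpleGraph V) (v : V) (u : V) : Prop :=
  Odd ((myH G v).dist ((myH G v).connectedComponentMk u).out u)

lemma walk_split {H : SimpleGraph V} {x y : V} {n : ℕ} (p : H.Walk x y)
    (hp : p.length = n + 1) :
    ∃ w, H.Adj x w ∧ ∃ q : H.Walk w y, q.length = n := by
  cases p with
  | nil => simp at hp
  | cons h q =>
    exact ⟨_, h, q, by simpa using hp⟩

lemma myC_cross (G : SimpleGraph V) (v u w0 : V) (h0 : (myH G v).Adj u w0) :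
    ∃ w, (myH G v).Adj u w ∧ ¬ (myC G v u ↔ myC G v w) := by
  classical
  set H := myH G v with hHdef
  set r := (H.connectedComponentMk u).out with hr
  have hmk : H.connectedComponentMk r = H.connectedComponentMk u :=
    (H.connectedComponentMk u).out_eq
  have hru : H.Reachable r u := (SimpleGraph.ConnectedComponent.eq).mp hmk
  have hroot : ∀ w, H.Adj u w → ((H.connectedComponentMk w).out : V) = r := by
    intro w hw
    rw [hr]
    congr 1
    exact SimpleGraph.ConnectedComponent.eq.mpr (hw.symm.reachable)
  rcases Nat.eq_zero_or_pos (H.dist r u) with hz | hpos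
  · have hrequ : r = u := (hru.dist_eq_zero_iff).mp hz
    refine ⟨w0, h0, ?_⟩
    have hd1 : H.dist r w0 = 1 := by
      rw [hrequ]
      exact SimpleGraph.dist_eq_one_iff_adj.mpr h0
    unfold myC
    rw [hroot w0 h0, hd1, hz]
    simp
  · obtain ⟨n, hn⟩ : ∃ n, H.dist r u = n + 1 := ⟨H.dist r u - 1, by omega⟩
    obtain ⟨p, hp⟩ := hru.exists_walk_length_eq_dist
    have hp' : p.reverse.length = n + 1 := by rw [SimpleGraph.Walk.length_reverse, hp, hn]
    obtain ⟨w, hw, q, hq⟩ := walk_split p.reverse hp'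
    have hle : H.dist r w ≤ n := by
      rw [SimpleGraph.dist_comm]
      exact (SimpleGraph.dist_le q).trans_eq hq
    have hge : n ≤ H.dist r w := by
      by_contra hlt
      push_neg at hlt
      have hrw : H.Reachable r w := hru.trans hw.reachable
      obtain ⟨p2, hp2⟩ := hrw.exists_walk_length_eq_dist
      have hcl := SimpleGraph.dist_le (p2.concat hw.symm)
      rw [SimpleGraph.Walk.length_concat, hp2] at hcl
      omega
    have hdw : H.dist r w = n := le_antisymm hle hge
    refine ⟨w, hw, ?_⟩
    unfold myC
    rw [hroot w hw, hdw, hn]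
    rw [Nat.odd_iff, Nat.odd_iff]
    omega


/-- A standard pair with `D = {v}` admits a strong orientation in which
every dominated vertex lies on a directed triangle through `v`. -/
theorem exists_orientation_directed_triangles {V : Type*} [Fintype V]
    (G : SimpleGraph V) (D : Set V) (v : V)
    (hstd : IsStandardPair G D) (hD : D = {v}) :
    ∃ R : V → V → Prop, IsOrientation G R ∧ IsStrong R ∧
      ∀ u, u ∉ D → ∃ w : V,
        (R v u ∧ R u w ∧ R w v) ∨ (R v w ∧ R w u ∧ R u v) := by
  classical
  obtain ⟨hbr, hind, hdom, htri⟩ := hstd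
  obtain ⟨N, ⟨e⟩⟩ := Finite.exists_equiv_fin V
  set c : V → Prop := myC G v with hc
  -- every vertex ≠ v is adjacent to v
  have hadj : ∀ u : V, u ≠ v → G.Adj v u := by
    intro u hu
    have hu' : u ∉ D := by rw [hD]; simpa using hu
    obtain ⟨x, ⟨hxD, hxadj⟩, _⟩ := hdom u hu'
    rw [hD] at hxD
    rw [← hxD]
    exact hxadj
  -- every vertex ≠ v has a neighbor ≠ v
  have hnb : ∀ u : V, u ≠ v → ∃ w, (myH G v).Adj u w := by
    intro u hu
    have hA : G.Adj u v := (hadj u hu).symm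
    have hnbr := hbr s(u, v)
    rw [SimpleGraph.isBridge_iff] at hnbr
    push_neg at hnbr
    obtain ⟨p⟩ := hnbr
    cases p with
    | nil => exact absurd rfl hu
    | cons h q =>
      rename_i w
      have h' : G.Adj u w ∧ ¬ ((s(u, w) = s(u, v)) ∧ u ≠ w) := by
        rw [SimpleGraph.deleteEdges_adj] at h
        exact ⟨h.1, fun hh => h.2 hh.1⟩
      have huw : G.Adj u w := h'.1
      have hwv : w ≠ v := by
        intro hwv
        exact h'.2 ⟨by rw [hwv], huw.ne⟩
      exact ⟨w, huw, hu, hwv⟩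
  have hcross : ∀ u : V, u ≠ v → ∃ w, w ≠ v ∧ G.Adj u w ∧ ¬ (c u ↔ c w) := by
    intro u hu
    obtain ⟨w0, hw0⟩ := hnb u hu
    obtain ⟨w, hw, hcw⟩ := myC_cross G v u w0 hw0
    exact ⟨w, hw.2.2, hw.1, hcw⟩
  set R : V → V → Prop := fun a b =>
    G.Adj a b ∧ ((a = v ∧ ¬ c b) ∨ (b = v ∧ c a) ∨
      (a ≠ v ∧ b ≠ v ∧ ((¬ c a ∧ c b) ∨ ((c a ↔ c b) ∧ e a < e b)))) with hR
  -- basic arcs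
  have hRvs : ∀ b, b ≠ v → ¬ c b → R v b := fun b hb hcb => ⟨hadj b hb, Or.inl ⟨rfl, hcb⟩⟩
  have hRtv : ∀ a, a ≠ v → c a → R a v := fun a ha hca =>
    ⟨(hadj a ha).symm, Or.inr (Or.inl ⟨rfl, hca⟩)⟩
  have hRst : ∀ a b, a ≠ v → b ≠ v → G.Adj a b → ¬ c a → c b → R a b :=
    fun a b ha hb hab hca hcb => ⟨hab, Or.inr (Or.inr ⟨ha, hb, Or.inl ⟨hca, hcb⟩⟩)⟩
  -- walks to v and from v
  have toV : ∀ x : V, ∃ m, HasDirWalk R x v m := by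
    intro x
    by_cases hx : x = v
    · exact ⟨0, hx ▸ hasDirWalk_zero R x⟩
    by_cases hcx : c x
    · exact ⟨1, hasDirWalk_one (hRtv x hx hcx)⟩
    · obtain ⟨w, hwV, hxw, hcw⟩ := hcross x hx
      have hcw' : c w := by tauto
      exact ⟨2, hasDirWalk_snoc (hasDirWalk_one (hRst x w hx hwV hxw hcx hcw'))
        (hRtv w hwV hcw')⟩
  have fromV : ∀ (x : V) (m : ℕ), HasDirWalk R x v m → ∀ y : V, ∃ n, HasDirWalk R x y n := by
    intro x m hm y
    by_cases hy : y = v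
    · exact ⟨m, hy ▸ hm⟩
    by_cases hcy : c y
    · obtain ⟨w, hwV, hyw, hcw⟩ := hcross y hy
      have hcw' : ¬ c w := by tauto
      exact ⟨m + 1 + 1, hasDirWalk_snoc (hasDirWalk_snoc hm (hRvs w hwV hcw'))
        (hRst w y hwV hy (hyw.symm) hcw' hcy)⟩
    · exact ⟨m + 1, hasDirWalk_snoc hm (hRvs y hy hcy)⟩
  refine ⟨R, ⟨fun a b h => h.1, ?_, ?_⟩, ?_, ?_⟩
  · -- totality
    intro a b hab
    by_cases ha : a = v
    · by_cases hcb : c b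
      · exact Or.inr ⟨hab.symm, Or.inr (Or.inl ⟨ha, hcb⟩)⟩
      · exact Or.inl ⟨hab, Or.inl ⟨ha, hcb⟩⟩
    by_cases hb : b = v
    · by_cases hca : c a
      · exact Or.inl ⟨hab, Or.inr (Or.inl ⟨hb, hca⟩)⟩
      · exact Or.inr ⟨hab.symm, Or.inl ⟨hb, hca⟩⟩
    have htr : e a < e b ∨ e b < e a :=
      lt_or_gt_of_ne (fun hEq => hab.ne (e.injective hEq))
    by_cases hca : c a <;> by_cases hcb : c b
    · rcases htr with hlt | hlt
      · exact Or.inl ⟨hab, Or.inr (Or.inr ⟨ha, hb, Or.inr ⟨iff_of_true hca hcb, hlt⟩⟩)⟩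
      · exact Or.inr ⟨hab.symm, Or.inr (Or.inr ⟨hb, ha, Or.inr ⟨iff_of_true hcb hca, hlt⟩⟩)⟩
    · exact Or.inr ⟨hab.symm, Or.inr (Or.inr ⟨hb, ha, Or.inl ⟨hcb, hca⟩⟩)⟩
    · exact Or.inl ⟨hab, Or.inr (Or.inr ⟨ha, hb, Or.inl ⟨hca, hcb⟩⟩)⟩
    · rcases htr with hlt | hlt
      · exact Or.inl ⟨hab, Or.inr (Or.inr ⟨ha, hb, Or.inr ⟨iff_of_false hca hcb, hlt⟩⟩)⟩
      · exact Or.inr ⟨hab.symm, Or.inr (Or.inr ⟨hb, ha, Or.inr ⟨iff_of_false hcb hca, hlt⟩⟩)⟩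
  · -- asymmetry
    intro a b h1 h2
    obtain ⟨hab, h1⟩ := h1
    obtain ⟨_, h2⟩ := h2
    have hne : a ≠ b := hab.ne
    rcases h1 with ⟨ha1, hb1⟩ | ⟨ha1, hb1⟩ | ⟨ha1, hb1, h1'⟩ <;>
      rcases h2 with ⟨ha2, hb2⟩ | ⟨ha2, hb2⟩ | ⟨ha2, hb2, h2'⟩ <;>
        try (first | exact hne (ha1.trans ha2.symm) | exact hne (ha2.trans ha1.symm) | tauto)
    rcases h1' with ⟨p1, q1⟩ | ⟨p1, q1⟩ <;> rcases h2' with ⟨p2, q2⟩ | ⟨p2, q2⟩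
    · exact p2 q1
    · exact p1 (p2.mp q1)
    · exact p2 (p1.mp q2)
    · exact (lt_asymm q1) q2
  · -- strong
    intro x y
    obtain ⟨m, hm⟩ := toV x
    exact fromV x m hm y
  · -- triangles
    intro u huD
    have hu : u ≠ v := by rw [hD] at huD; simpa using huD
    obtain ⟨w, hwV, huw, hcw⟩ := hcross u hu
    by_cases hcu : c u
    · have hcw' : ¬ c w := by tauto
      exact ⟨w, Or.inr ⟨hRvs w hwV hcw', hRst w u hwV hu huw.symm hcw' hcu,
        hRtv u hu hcu⟩⟩
    · have hcw' : c w := by tauto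
      exact ⟨w, Or.inl ⟨hRvs u hu hcu, hRst u w hu hwV huw hcu hcw',
        hRtv w hwV hcw'⟩⟩
end
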